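/- Let S be an m × n selection matrix with n ≥ m+1. Suppose that for every subset I ⊆ [m] of row indices, there exists i* ∈ I such that S[j, p_{i*}] = 0 for all j ∈ I \ {i*} or S[j, q_{i*}] = 0 for all j ∈ I \ {i*}. Then there exists an m × m permutation matrix P such that P·S is incremental. -/
import Mathlib


/-- The selection row `e_p - e_q` in `ℝ^n`. -/
def selRow {n : ℕ} (p q : Fin n) : Fin n → ℝ :=
  fun j => (if j = p then (1 : ℝ) else 0) - (if j = q then (1 : ℝ) else 0)

/-- A matrix is incremental if each row is supported on some column that is zero in all
earlier rows (i.e., each row introduces a new item). -/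
def Incremental {m n : ℕ} (S : Matrix (Fin m) (Fin n) ℝ) : Prop :=
  ∀ k, ∃ c, S k c ≠ 0 ∧ ∀ j, j < k → S j c = 0

/-- The chain of shrinking row sets obtained by repeatedly removing a chosen row. -/
noncomputable def chainAux {m n : ℕ} (S : Matrix (Fin m) (Fin n) ℝ) (p q : Fin m → Fin n)
    (hsub : ∀ I : Finset (Fin m), I.Nonempty →
      ∃ i ∈ I, (∀ j ∈ I, j ≠ i → S j (p i) = 0) ∨ (∀ j ∈ I, j ≠ i → S j (q i) = 0)) :
    ℕ → Finset (Fin m)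
  | 0 => Finset.univ
  | k + 1 =>
    let I := chainAux S p q hsub k
    if h : I.Nonempty then I.erase (hsub I h).choose else ∅

lemma chainAux_card {m n : ℕ} (S : Matrix (Fin m) (Fin n) ℝ) (p q : Fin m → Fin n)
    (hsub : ∀ I : Finset (Fin m), I.Nonempty →
      ∃ i ∈ I, (∀ j ∈ I, j ≠ i → S j (p i) = 0) ∨ (∀ j ∈ I, j ≠ i → S j (q i) = 0)) :
    ∀ k, (chainAux S p q hsub k).card = m - k := by
  intro k
  induction k with
  | zero => simp [chainAux]
  | succ k ih =>
    rw [chainAux]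
    by_cases h : (chainAux S p q hsub k).Nonempty
    · rw [dif_pos h, Finset.card_erase_of_mem (hsub _ h).choose_spec.1, ih]
      omega
    · rw [dif_neg h]
      have : (chainAux S p q hsub k).card = 0 := by
        simpa [Finset.card_eq_zero, Finset.not_nonempty_iff_eq_empty] using h
      simp only [Finset.card_empty]
      omega

lemma chainAux_succ_subset {m n : ℕ} (S : Matrix (Fin m) (Fin n) ℝ) (p q : Fin m → Fin n)
    (hsub : ∀ I : Finset (Fin m), I.Nonempty →
      ∃ i ∈ I, (∀ j ∈ I, j ≠ i → S j (p i) = 0) ∨ (∀ j ∈ I, j ≠ i → S j (q i) = 0)) :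
    ∀ k, chainAux S p q hsub (k + 1) ⊆ chainAux S p q hsub k := by
  intro k
  rw [chainAux]
  by_cases h : (chainAux S p q hsub k).Nonempty
  · rw [dif_pos h]; exact Finset.erase_subset _ _
  · rw [dif_neg h]; exact Finset.empty_subset _

lemma chainAux_mono {m n : ℕ} (S : Matrix (Fin m) (Fin n) ℝ) (p q : Fin m → Fin n)
    (hsub : ∀ I : Finset (Fin m), I.Nonempty →
      ∃ i ∈ I, (∀ j ∈ I, j ≠ i → S j (p i) = 0) ∨ (∀ j ∈ I, j ≠ i → S j (q i) = 0)) :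
    ∀ a b, a ≤ b → chainAux S p q hsub b ⊆ chainAux S p q hsub a := by
  intro a b hab
  induction b with
  | zero => simpa [Nat.le_zero.mp hab] using Finset.Subset.refl _
  | succ b ih =>
    rcases Nat.lt_or_ge a (b + 1) with h | h
    · exact (chainAux_succ_subset S p q hsub b).trans (ih (Nat.lt_succ_iff.mp h))
    · have : a = b + 1 := le_antisymm hab h
      subst this; exact Finset.Subset.refl _

theorem selection_subset_new_implies_incremental {m n : ℕ} (hn : m + 1 ≤ n)
    (S : Matrix (Fin m) (Fin n) ℝ) (p q : Fin m → Fin n)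
    (hpq : ∀ i, p i ≠ q i) (hS : ∀ i, S i = selRow (p i) (q i))
    (hsub : ∀ I : Finset (Fin m), I.Nonempty →
      ∃ i ∈ I, (∀ j ∈ I, j ≠ i → S j (p i) = 0) ∨ (∀ j ∈ I, j ≠ i → S j (q i) = 0)) :
    ∃ (P : Matrix (Fin m) (Fin m) ℝ) (σ : Equiv.Perm (Fin m)),
      P = σ.permMatrix ℝ ∧ Incremental (P * S) := by
  classical
  set C := chainAux S p q hsub with hC
  -- nonemptiness of chain k for k < m
  have hne : ∀ k, k < m → (C k).Nonempty := by
    intro k hk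
    rw [← Finset.card_pos, hC, chainAux_card]
    omega
  -- the enumeration, from last to first
  have hglt : ∀ k : Fin m, m - 1 - (k : ℕ) < m := by
    intro k; have := k.isLt; omega
  set g : Fin m → Fin m := fun k => (hsub (C (m - 1 - (k : ℕ))) (hne _ (hglt k))).choose
    with hg
  have hg_mem : ∀ k : Fin m, g k ∈ C (m - 1 - (k : ℕ)) := fun k =>
    (hsub (C (m - 1 - (k : ℕ))) (hne _ (hglt k))).choose_spec.1
  have hg_spec : ∀ k : Fin m,
      (∀ j ∈ C (m - 1 - (k : ℕ)), j ≠ g k → S j (p (g k)) = 0) ∨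
      (∀ j ∈ C (m - 1 - (k : ℕ)), j ≠ g k → S j (q (g k)) = 0) := fun k =>
    (hsub (C (m - 1 - (k : ℕ))) (hne _ (hglt k))).choose_spec.2
  -- chain at step t+1 excludes the element chosen at step t
  have hsucc : ∀ k : Fin m,
      C (m - 1 - (k : ℕ) + 1) = (C (m - 1 - (k : ℕ))).erase (g k) := by
    intro k
    rw [hC]
    show chainAux S p q hsub (m - 1 - (k : ℕ) + 1) = _
    rw [chainAux, dif_pos (hne _ (hglt k))]
  -- key: if j < k then g j ∈ C (m-1-k) erased of g k, in particular g j ≠ g k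
  have hkey : ∀ j k : Fin m, j < k →
      g j ∈ (C (m - 1 - (k : ℕ))).erase (g k) := by
    intro j k hjk
    have h1 : m - 1 - (k : ℕ) + 1 ≤ m - 1 - (j : ℕ) := by
      have := k.isLt; have := j.isLt
      have : (j : ℕ) < (k : ℕ) := hjk
      omega
    have := chainAux_mono S p q hsub _ _ h1 (hg_mem j)
    rwa [← hC, hsucc k] at this
  have hginj : Function.Injective g := by
    intro a b hab
    rcases lt_trichotomy a b with h | h | h
    · exact absurd (Finset.mem_erase.mp (hkey a b h)).1 (by simp [hab])
    · exact h
    · exact absurd (Finset.mem_erase.mp (hkey b a h)).1 (by simp [hab])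
  let σ : Equiv.Perm (Fin m) := Equiv.ofBijective g (Finite.injective_iff_bijective.mp hginj)
  refine ⟨σ.permMatrix ℝ, σ, rfl, ?_⟩
  intro k
  have hmul : ∀ (r : Fin m) (c : Fin n), (σ.permMatrix ℝ * S) r c = S (g r) c := by
    intro r c
    rw [Equiv.Perm.permMatrix, PEquiv.toMatrix_toPEquiv_mul]
    rfl
  have hSne : ∀ i : Fin m, S i (p i) ≠ 0 ∧ S i (q i) ≠ 0 := by
    intro i
    rw [hS i]
    unfold selRow
    constructor
    · simp [hpq i]
    · simp [(hpq i).symm, Ne.symm (hpq i)]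
  rcases hg_spec k with h | h
  · refine ⟨p (g k), ?_, ?_⟩
    · rw [hmul _ _]; exact (hSne (g k)).1
    · intro j hjk
      rw [hmul _ _]
      have hm := hkey j k hjk
      exact h _ (Finset.mem_of_mem_erase hm) (Finset.mem_erase.mp hm).1
  · refine ⟨q (g k), ?_, ?_⟩
    · rw [hmul _ _]; exact (hSne (g k)).2
    · intro j hjk
      rw [hmul _ _]
      have hm := hkey j k hjk
      exact h _ (Finset.mem_of_mem_erase hm) (Finset.mem_erase.mp hm).1
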